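/- Let X be a finite nonempty alphabet and let p, q be probability distributions on X with p(x) > 0 and q(x) > 0 for all x. Then for every λ ∈ [0,1], H*(λp + (1−λ)q) ≥ λ H*(p) + (1−λ) H*(q); moreover if p ≠ q and 0 < λ < 1 the inequality is strict. That is, the Lin entropy functional H* is strictly concave on the interior of the probability simplex. -/

import Mathlib

/-- Lin entropy of a distribution on a finite alphabet. -/
noncomputable def linEntropy {X : Type*} [Fintype X] (p : X → ℝ) : ℝ :=
  ∑ x, p x * ((1 / 2) * Real.logb 2 (4 * p x ^ p x / (p x + 1) ^ (p x + 1)))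

noncomputable def linPhi (t : ℝ) : ℝ :=
  t + (2 * Real.log 2)⁻¹ * (t ^ 2 * Real.log t - (t ^ 2 + t) * Real.log (t + 1))

noncomputable def linPhi1 (t : ℝ) : ℝ :=
  1 + (2 * Real.log 2)⁻¹ * (2 * t * Real.log t - (2 * t + 1) * Real.log (t + 1))

noncomputable def linPhi2 (t : ℝ) : ℝ :=
  (2 * Real.log 2)⁻¹ * (2 * Real.log t - 2 * Real.log (t + 1) + (t + 1)⁻¹)

lemma hasDerivAt_linPhi {t : ℝ} (ht : 0 < t) : HasDerivAt linPhi (linPhi1 t) t := by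
  have h1 : (0:ℝ) < t + 1 := by linarith
  have hlog1 : HasDerivAt (fun s : ℝ => Real.log (s + 1)) (t + 1)⁻¹ t := by
    have h := (Real.hasDerivAt_log h1.ne').comp t ((hasDerivAt_id t).add_const 1)
    exact h.congr_deriv (by simp)
  have hA : HasDerivAt (fun s : ℝ => s ^ 2 * Real.log s) (2 * t * Real.log t + t) t := by
    have h := (hasDerivAt_pow 2 t).mul (Real.hasDerivAt_log ht.ne')
    refine h.congr_deriv ?_
    field_simp
    ring
  have hB : HasDerivAt (fun s : ℝ => (s ^ 2 + s) * Real.log (s + 1))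
      ((2 * t + 1) * Real.log (t + 1) + t) t := by
    have h := ((hasDerivAt_pow 2 t).add (hasDerivAt_id t)).mul hlog1
    refine h.congr_deriv ?_
    simp only [Pi.add_apply, id]
    field_simp
    ring
  have h := ((hasDerivAt_id t).add ((hA.sub hB).const_mul (2 * Real.log 2)⁻¹))
  refine h.congr_deriv ?_
  simp only [linPhi1]
  ring

lemma hasDerivAt_linPhi1 {t : ℝ} (ht : 0 < t) : HasDerivAt linPhi1 (linPhi2 t) t := by
  have h1 : (0:ℝ) < t + 1 := by linarith
  have hlog1 : HasDerivAt (fun s : ℝ => Real.log (s + 1)) (t + 1)⁻¹ t := by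
    have h := (Real.hasDerivAt_log h1.ne').comp t ((hasDerivAt_id t).add_const 1)
    exact h.congr_deriv (by simp)
  have h2t : HasDerivAt (fun s : ℝ => 2 * s) 2 t := by
    simpa using (hasDerivAt_id t).const_mul 2
  have hA : HasDerivAt (fun s : ℝ => 2 * s * Real.log s) (2 * Real.log t + 2) t := by
    have h := h2t.mul (Real.hasDerivAt_log ht.ne')
    refine h.congr_deriv ?_
    field_simp
  have hB : HasDerivAt (fun s : ℝ => (2 * s + 1) * Real.log (s + 1))
      (2 * Real.log (t + 1) + (2 * t + 1) * (t + 1)⁻¹) t := by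
    have h := (h2t.add_const 1).mul hlog1
    exact h
  have h := ((hA.sub hB).const_mul (2 * Real.log 2)⁻¹).const_add 1
  refine h.congr_deriv ?_
  simp only [linPhi2]
  rw [show (2:ℝ) * Real.log t - 2 * Real.log (t+1) + (t+1)⁻¹
      = (2 * Real.log t + 2) - (2 * Real.log (t+1) + (2*t+1) * (t+1)⁻¹) by
    field_simp; ring]

lemma linPhi2_neg {t : ℝ} (ht : 0 < t) : linPhi2 t < 0 := by
  have h1 : (0:ℝ) < t + 1 := by linarith
  have hc : (0:ℝ) < (2 * Real.log 2)⁻¹ := by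
    have := Real.log_pos one_lt_two
    positivity
  set u : ℝ := t / (t + 1) with hu
  have hu0 : 0 < u := div_pos ht h1
  have hu1 : u < 1 := (div_lt_one h1).mpr (by linarith)
  have hlog : Real.log u < u - 1 := Real.log_lt_sub_one_of_pos hu0 hu1.ne
  have hlogu : Real.log u = Real.log t - Real.log (t + 1) := Real.log_div ht.ne' h1.ne'
  have hinv : (t + 1)⁻¹ = 1 - u := by
    rw [hu]
    field_simp
    ring
  have : 2 * Real.log t - 2 * Real.log (t + 1) + (t + 1)⁻¹ < 0 := by
    rw [hinv]
    nlinarith [hlog, hlogu, hu1]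
  simp only [linPhi2]
  exact mul_neg_of_pos_of_neg hc this

lemma linPhi_strictConcave : StrictConcaveOn ℝ (Set.Ioi 0) linPhi := by
  apply strictConcaveOn_of_deriv2_neg (convex_Ioi 0)
  · exact fun t ht => (hasDerivAt_linPhi ht).continuousAt.continuousWithinAt
  · intro t ht
    rw [interior_Ioi] at ht
    have hev : deriv linPhi =ᶠ[nhds t] linPhi1 := by
      filter_upwards [Ioi_mem_nhds ht] with s hs using (hasDerivAt_linPhi hs).deriv
    have h2 : deriv^[2] linPhi t = deriv (deriv linPhi) t := rfl
    rw [h2, hev.deriv_eq, (hasDerivAt_linPhi1 ht).deriv]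
    exact linPhi2_neg ht

lemma linTerm_eq {t : ℝ} (ht : 0 < t) :
    t * ((1 / 2) * Real.logb 2 (4 * t ^ t / (t + 1) ^ (t + 1))) = linPhi t := by
  have h1 : (0:ℝ) < t + 1 := by linarith
  have hpt : (0:ℝ) < t ^ t := Real.rpow_pos_of_pos ht t
  have hpt1 : (0:ℝ) < (t + 1) ^ (t + 1) := Real.rpow_pos_of_pos h1 (t + 1)
  have hlog : Real.log (4 * t ^ t / (t + 1) ^ (t + 1))
      = 2 * Real.log 2 + t * Real.log t - (t + 1) * Real.log (t + 1) := by
    rw [Real.log_div (by positivity) hpt1.ne', Real.log_mul (by norm_num) hpt.ne',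
      Real.log_rpow ht, Real.log_rpow h1,
      show (4:ℝ) = 2 ^ 2 by norm_num, Real.log_pow]
    push_cast
    ring
  have hl2 : Real.log 2 ≠ 0 := (Real.log_pos one_lt_two).ne'
  rw [Real.logb, hlog]
  simp only [linPhi]
  field_simp
  ring

lemma linEntropy_eq {X : Type*} [Fintype X] (p : X → ℝ) (hp : ∀ x, 0 < p x) :
    linEntropy p = ∑ x, linPhi (p x) :=
  Finset.sum_congr rfl fun x _ => linTerm_eq (hp x)

lemma combo_pos {a b l : ℝ} (ha : 0 < a) (hb : 0 < b) (h0 : 0 ≤ l) (h1 : l ≤ 1) :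
    0 < l * a + (1 - l) * b := by
  rcases h0.eq_or_lt with h | h
  · simp [← h, hb]
  · nlinarith [mul_pos h ha, mul_nonneg (by linarith : (0:ℝ) ≤ 1 - l) hb.le]

/-- Lin entropy is concave on the interior of the probability simplex, and strictly so:
for strictly positive distributions `p ≠ q` and `0 < λ < 1` the concavity inequality is
strict. -/
theorem linEntropy_strictConcave
    {X : Type*} [Fintype X] [Nonempty X] (p q : X → ℝ)
    (hp : ∀ x, 0 < p x) (hq : ∀ x, 0 < q x)
    (hps : ∑ x, p x = 1) (hqs : ∑ x, q x = 1)
    (lam : ℝ) (h0 : 0 ≤ lam) (h1 : lam ≤ 1) :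
    linEntropy (fun x => lam * p x + (1 - lam) * q x) ≥
        lam * linEntropy p + (1 - lam) * linEntropy q ∧
      (p ≠ q → 0 < lam → lam < 1 →
        linEntropy (fun x => lam * p x + (1 - lam) * q x) >
          lam * linEntropy p + (1 - lam) * linEntropy q) := by
  have hr : ∀ x, 0 < lam * p x + (1 - lam) * q x :=
    fun x => combo_pos (hp x) (hq x) h0 h1
  have hEc : linEntropy (fun x => lam * p x + (1 - lam) * q x)
      = ∑ x, linPhi (lam * p x + (1 - lam) * q x) := linEntropy_eq _ hr
  have hEp := linEntropy_eq p hp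
  have hEq := linEntropy_eq q hq
  have hterm : ∀ x : X, lam * linPhi (p x) + (1 - lam) * linPhi (q x)
      ≤ linPhi (lam * p x + (1 - lam) * q x) := by
    intro x
    rcases eq_or_ne (p x) (q x) with he | he
    · rw [he]
      have : lam * q x + (1 - lam) * q x = q x := by ring
      rw [this]
      linarith
    · exact linPhi_strictConcave.concaveOn.2 (Set.mem_Ioi.mpr (hp x))
        (Set.mem_Ioi.mpr (hq x)) h0 (by linarith) (by ring)
  have hsum : lam * linEntropy p + (1 - lam) * linEntropy q
      = ∑ x, (lam * linPhi (p x) + (1 - lam) * linPhi (q x)) := by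
    rw [hEp, hEq, Finset.sum_add_distrib, Finset.mul_sum, Finset.mul_sum]
  constructor
  · rw [hEc, hsum, ge_iff_le]
    exact Finset.sum_le_sum fun x _ => hterm x
  · intro hne hl0 hl1
    obtain ⟨x₀, hx₀⟩ : ∃ x, p x ≠ q x := by
      by_contra h
      push_neg at h
      exact hne (funext h)
    rw [hEc, hsum]
    apply Finset.sum_lt_sum (fun x _ => hterm x)
    refine ⟨x₀, Finset.mem_univ _, ?_⟩
    exact linPhi_strictConcave.2 (Set.mem_Ioi.mpr (hp x₀)) (Set.mem_Ioi.mpr (hq x₀))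
      hx₀ hl0 (by linarith) (by ring)
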